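/- Let d ≥ 1, let Ω ⊆ ℝ^d be a bounded measurable set, let ρ : ℝ^d → ℝ be a nonnegative integrable function with associated measure π(A) = ∫_A ρ(x) dx, let dist : ℝ^d × ℝ^d → ℝ be a continuous nonnegative function, let y_1, …, y_K ∈ ℝ^d, let c ∈ ℝ^K, and let w ∈ ℝ^K. Define F(w) = ∫_Ω min_{j=1,…,K}(dist(x,y_j) − w_j) ρ(x) dx + Σ_k w_k c_k and the tie-broken power cells V_k(w) = {x ∈ Ω : dist(x,y_k) − w_k ≤ dist(x,y_j) − w_j for all j, with strict inequality for all j < k}. Fix i ∈ {1,…,K} and suppose the tie set has measure zero: π({x ∈ Ω : dist(x,y_i) − w_i = min_{j ≠ i}(dist(x,y_j) − w_j)}) = 0. Then the function t ↦ F(w + t e_i) is differentiable at t = 0 with derivative c_i − π(V_i(w)), where e_i is the i-th standard basis vector of ℝ^K. -/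

import Mathlib

open MeasureTheory

/-- The tie-broken power cell of the generator `y k` with weight `w k` in `Ω`: points of `Ω`
where `dst x (y k) - w k` is minimal among all generators, with ties assigned to the
smallest index. -/
def powerCell {d K : ℕ} (Ω : Set (EuclideanSpace ℝ (Fin d)))
    (dst : EuclideanSpace ℝ (Fin d) → EuclideanSpace ℝ (Fin d) → ℝ)
    (y : Fin K → EuclideanSpace ℝ (Fin d)) (w : Fin K → ℝ) (k : Fin K) :
    Set (EuclideanSpace ℝ (Fin d)) :=
  {x ∈ Ω | (∀ j, dst x (y k) - w k ≤ dst x (y j) - w j) ∧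
    ∀ j, j < k → dst x (y k) - w k < dst x (y j) - w j}

theorem stmt_16 (d K : ℕ) (hd : 1 ≤ d) (hK : 0 < K)
    (Ω : Set (EuclideanSpace ℝ (Fin d)))
    (hΩb : Bornology.IsBounded Ω) (hΩm : MeasurableSet Ω)
    (ρ : EuclideanSpace ℝ (Fin d) → ℝ) (hρ0 : ∀ x, 0 ≤ ρ x) (hρi : Integrable ρ)
    (dst : EuclideanSpace ℝ (Fin d) → EuclideanSpace ℝ (Fin d) → ℝ)
    (hdstc : Continuous fun p : EuclideanSpace ℝ (Fin d) × EuclideanSpace ℝ (Fin d) => dst p.1 p.2)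
    (hdst0 : ∀ x y, 0 ≤ dst x y)
    (y : Fin K → EuclideanSpace ℝ (Fin d)) (c : Fin K → ℝ)
    (w : Fin K → ℝ) (i : Fin K)
    (htie : (∫ x in {x ∈ Ω | dst x (y i) - w i
        = ⨅ j : {j : Fin K // j ≠ i}, (dst x (y (j : Fin K)) - w (j : Fin K))}, ρ x) = 0) :
    HasDerivAt (fun t : ℝ =>
        (∫ x in Ω, (⨅ j, (dst x (y j) - (w + t • (Pi.single i 1 : Fin K → ℝ)) j)) * ρ x)
        + ∑ k, (w + t • (Pi.single i 1 : Fin K → ℝ)) k * c k)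
      (c i - ∫ x in powerCell Ω dst y w i, ρ x) 0 := by
  classical
  haveI : Nonempty (Fin K) := ⟨i⟩
  have hcont : ∀ j : Fin K, Continuous fun x : EuclideanSpace ℝ (Fin d) => dst x (y j) - w j :=
    fun j => (hdstc.comp (continuous_id.prodMk continuous_const)).sub continuous_const
  have hfm : ∀ j : Fin K, Measurable fun x : EuclideanSpace ℝ (Fin d) => dst x (y j) - w j :=
    fun j => (hcont j).measurable
  have hbddR : ∀ {ι : Type} [Nonempty ι] [Finite ι] (g : ι → ℝ), BddBelow (Set.range g) :=
    fun g => (Set.finite_range g).bddBelow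
  set P := powerCell Ω dst y w i with hP
  have hPsub : P ⊆ Ω := fun x hx => hx.1
  have hPm : MeasurableSet P := by
    have hPeq : P = Ω ∩ ((⋂ j, {x | dst x (y i) - w i ≤ dst x (y j) - w j}) ∩
        ⋂ j, ⋂ _h : j < i, {x | dst x (y i) - w i < dst x (y j) - w j}) := by
      ext x
      simp only [hP, powerCell, Set.mem_setOf_eq, Set.mem_inter_iff, Set.mem_iInter]
      try tauto
    rw [hPeq]
    exact hΩm.inter ((MeasurableSet.iInter fun j => measurableSet_le (hfm i) (hfm j)).inter
      (MeasurableSet.iInter fun j => MeasurableSet.iInter fun _ =>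
        measurableSet_lt (hfm i) (hfm j)))
  obtain ⟨b, hbm, hiInf, hae, hltP, hgtP⟩ :
      ∃ b : EuclideanSpace ℝ (Fin d) → ℝ,
        Measurable b ∧
        (∀ t : ℝ, |t| < 1 → ∀ x,
          (⨅ j, (dst x (y j) - w j - t * (Pi.single i 1 : Fin K → ℝ) j))
            = min (dst x (y i) - w i - t) (b x)) ∧
        (∀ᵐ x ∂(volume.restrict Ω), ρ x = 0 ∨ dst x (y i) - w i ≠ b x) ∧
        (∀ x ∈ Ω, dst x (y i) - w i < b x → x ∈ P) ∧
        (∀ x, b x < dst x (y i) - w i → x ∉ P) := by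
    rcases isEmpty_or_nonempty {j : Fin K // j ≠ i} with he | hne
    · have hall : ∀ j : Fin K, j = i := by
        intro j; by_contra h; exact he.false ⟨j, h⟩
      refine ⟨fun x => dst x (y i) - w i + 1, (hfm i).add measurable_const, ?_, ?_, ?_, ?_⟩
      · intro t ht x
        have h1 : (⨅ j, (dst x (y j) - w j - t * (Pi.single i 1 : Fin K → ℝ) j))
            = dst x (y i) - w i - t := by
          apply le_antisymm
          · simpa [Pi.single_eq_same] using ciInf_le (hbddR (fun j : Fin K =>
              dst x (y j) - w j - t * (Pi.single i 1 : Fin K → ℝ) j)) i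
          · refine le_ciInf fun j => ?_
            rw [hall j]; simp [Pi.single_eq_same]
        rw [h1, min_eq_left]
        have := abs_lt.1 ht
        dsimp only
        linarith
      · exact Filter.Eventually.of_forall fun x => Or.inr (by intro h; simp only at h; linarith)
      · intro x hx _
        simp only [hP, powerCell, Set.mem_setOf_eq]
        refine ⟨hx, fun j => ?_, fun j hj => ?_⟩
        · rw [hall j]
        · exact absurd (hall j) (ne_of_lt hj)
      · intro x hb
        simp only at hb
        exact fun _ => by linarith
    · refine ⟨fun x => ⨅ j : {j : Fin K // j ≠ i}, (dst x (y (j : Fin K)) - w (j : Fin K)),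
        Measurable.iInf (fun j => hfm j.1), ?_, ?_, ?_, ?_⟩
      · intro t ht x
        apply le_antisymm
        · apply le_min
          · simpa [Pi.single_eq_same] using ciInf_le (hbddR (fun j : Fin K =>
              dst x (y j) - w j - t * (Pi.single i 1 : Fin K → ℝ) j)) i
          · refine le_ciInf fun j => ?_
            simpa [Pi.single_eq_of_ne j.2] using
              ciInf_le (hbddR fun k : Fin K =>
                dst x (y k) - w k - t * (Pi.single i 1 : Fin K → ℝ) k) (j : Fin K)
        · refine le_ciInf fun j => ?_
          by_cases hj : j = i
          · subst hj; simpa [Pi.single_eq_same] using min_le_left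
              (dst x (y j) - w j - t) ((⨅ k : {j : Fin K // j ≠ i}, (dst x (y (k : Fin K)) - w (k : Fin K))))
          · refine le_trans (min_le_right _ _) ?_
            simpa [Pi.single_eq_of_ne hj] using
              ciInf_le (hbddR fun k : {j : Fin K // j ≠ i} =>
                dst x (y (k : Fin K)) - w (k : Fin K)) ⟨j, hj⟩
      · have hTm : MeasurableSet {x ∈ Ω | dst x (y i) - w i
            = ⨅ j : {j : Fin K // j ≠ i}, (dst x (y (j : Fin K)) - w (j : Fin K))} :=
          hΩm.inter (measurableSet_eq_fun (hfm i) (Measurable.iInf fun j => hfm j.1))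
        have hzero : ∀ᵐ x ∂(volume.restrict {x ∈ Ω | dst x (y i) - w i
            = ⨅ j : {j : Fin K // j ≠ i}, (dst x (y (j : Fin K)) - w (j : Fin K))}), ρ x = 0 := by
          have := (integral_eq_zero_iff_of_nonneg (fun x => hρ0 x) hρi.restrict).1 htie
          filter_upwards [this] with x hx using hx
        have hae1 := (ae_restrict_iff' hTm).1 hzero
        have hae2 : ∀ᵐ x ∂(volume.restrict Ω), x ∈ {x ∈ Ω | dst x (y i) - w i
            = ⨅ j : {j : Fin K // j ≠ i}, (dst x (y (j : Fin K)) - w (j : Fin K))} → ρ x = 0 :=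
          ae_restrict_of_ae hae1
        filter_upwards [hae2, ae_restrict_mem hΩm] with x hx hxΩ
        by_cases hb : dst x (y i) - w i
            = ⨅ j : {j : Fin K // j ≠ i}, (dst x (y (j : Fin K)) - w (j : Fin K))
        · exact Or.inl (hx ⟨hxΩ, hb⟩)
        · exact Or.inr hb
      · intro x hxΩ hlt
        simp only [hP, powerCell, Set.mem_setOf_eq]
        refine ⟨hxΩ, fun j => ?_, fun j hj => ?_⟩
        · by_cases hj : j = i
          · subst hj; exact le_refl _
          · exact le_of_lt (lt_of_lt_of_le hlt (ciInf_le (hbddR (fun k : {j : Fin K // j ≠ i} => dst x (y (k : Fin K)) - w (k : Fin K))) ⟨j, hj⟩))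
        · exact lt_of_lt_of_le hlt (ciInf_le (hbddR (fun k : {j : Fin K // j ≠ i} => dst x (y (k : Fin K)) - w (k : Fin K))) ⟨j, ne_of_lt hj⟩)
      · intro x hlt hxP
        obtain ⟨j0, hj0⟩ := exists_eq_ciInf_of_finite
          (f := fun j : {j : Fin K // j ≠ i} => dst x (y (j : Fin K)) - w (j : Fin K))
        have h1 : dst x (y i) - w i ≤ dst x (y (j0 : Fin K)) - w (j0 : Fin K) := hxP.2.1 j0.1
        rw [hj0] at h1
        exact absurd h1 (not_le.2 hlt)
  -- normalize the goal
  have hrw : ∀ (t : ℝ) (x : EuclideanSpace ℝ (Fin d)) (j : Fin K),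
      dst x (y j) - (w + t • (Pi.single i 1 : Fin K → ℝ)) j
        = dst x (y j) - w j - t * (Pi.single i 1 : Fin K → ℝ) j := by
    intro t x j
    simp only [Pi.add_apply, Pi.smul_apply, smul_eq_mul]
    ring
  have hsum : ∀ t : ℝ, (∑ k, (w + t • (Pi.single i 1 : Fin K → ℝ)) k * c k)
      = (∑ k, w k * c k) + t * c i := by
    intro t
    have h1 : ∀ k : Fin K, (w + t • (Pi.single i 1 : Fin K → ℝ)) k * c k
        = w k * c k + (if k = i then t * c k else 0) := by
      intro k
      simp only [Pi.add_apply, Pi.smul_apply, smul_eq_mul, Pi.single_apply]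
      by_cases hk : k = i <;> simp [hk] <;> ring
    rw [Finset.sum_congr rfl fun k _ => h1 k, Finset.sum_add_distrib,
      Finset.sum_ite_eq' Finset.univ i fun k => t * c k]
    simp
  simp only [hrw, hsum]
  set F' : EuclideanSpace ℝ (Fin d) → ℝ := P.indicator (fun x => -ρ x) with hF'
  have hmeas : ∀ᶠ t : ℝ in nhds 0, AEStronglyMeasurable
      (fun x => (⨅ j, (dst x (y j) - w j - t * (Pi.single i 1 : Fin K → ℝ) j)) * ρ x)
      (volume.restrict Ω) :=
    Filter.Eventually.of_forall fun t =>
      (Measurable.iInf fun j => (hfm j).sub measurable_const).aestronglyMeasurable.mul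
        hρi.aestronglyMeasurable.restrict
  obtain ⟨C, hC⟩ : ∃ C : ℝ, ∀ x ∈ Ω,
      |⨅ j, (dst x (y j) - w j - (0:ℝ) * (Pi.single i 1 : Fin K → ℝ) j)| ≤ C := by
    have hhc : Continuous fun x : EuclideanSpace ℝ (Fin d) => ∑ j, |dst x (y j) - w j| :=
      continuous_finset_sum _ fun j _ => (hcont j).abs
    rcases Ω.eq_empty_or_nonempty with hΩe | hΩe
    · exact ⟨0, by simp [hΩe]⟩
    obtain ⟨z, hz, hzmax⟩ := hΩb.isCompact_closure.exists_isMaxOn hΩe.closure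
      hhc.continuousOn
    refine ⟨∑ j, |dst z (y j) - w j|, fun x hx => ?_⟩
    refine le_trans ?_ (hzmax (subset_closure hx))
    have heq : (fun j : Fin K => dst x (y j) - w j - (0:ℝ) * (Pi.single i 1 : Fin K → ℝ) j)
        = fun j => dst x (y j) - w j := by funext j; ring
    rw [heq, abs_le]
    constructor
    · refine le_ciInf fun j => ?_
      have h1 : |dst x (y j) - w j| ≤ ∑ k, |dst x (y k) - w k| :=
        Finset.single_le_sum (f := fun k : Fin K => |dst x (y k) - w k|)
          (fun k _ => abs_nonneg _) (Finset.mem_univ j)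
      have h2 := neg_abs_le (dst x (y j) - w j)
      linarith
    · refine le_trans (ciInf_le (hbddR _) i) ?_
      exact le_trans (le_abs_self _)
        (Finset.single_le_sum (f := fun k : Fin K => |dst x (y k) - w k|)
          (fun k _ => abs_nonneg _) (Finset.mem_univ i))
  have hint : Integrable
      (fun x => (⨅ j, (dst x (y j) - w j - (0:ℝ) * (Pi.single i 1 : Fin K → ℝ) j)) * ρ x)
      (volume.restrict Ω) := by
    refine Integrable.mono (hρi.restrict.const_mul C) ?_ ?_
    · exact (Measurable.iInf fun j => (hfm j).sub measurable_const).aestronglyMeasurable.mul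
        hρi.aestronglyMeasurable.restrict
    · filter_upwards [ae_restrict_mem hΩm] with x hx
      rw [Real.norm_eq_abs, Real.norm_eq_abs, abs_mul]
      calc |⨅ j, (dst x (y j) - w j - (0:ℝ) * (Pi.single i 1 : Fin K → ℝ) j)| * |ρ x|
          ≤ C * |ρ x| := mul_le_mul_of_nonneg_right (hC x hx) (abs_nonneg _)
        _ ≤ |C * ρ x| := by
            rw [abs_mul]
            exact mul_le_mul_of_nonneg_right (le_abs_self C) (abs_nonneg _)
  have hF'm : AEStronglyMeasurable F' (volume.restrict Ω) :=
    (hρi.aestronglyMeasurable.neg.indicator hPm).restrict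
  have hlip : ∀ᵐ x ∂(volume.restrict Ω), LipschitzOnWith (Real.nnabs (ρ x))
      (fun t : ℝ => (⨅ j, (dst x (y j) - w j - t * (Pi.single i 1 : Fin K → ℝ) j)) * ρ x)
      (Metric.ball (0:ℝ) 1) := by
    refine Filter.Eventually.of_forall fun x => ?_
    apply LipschitzOnWith.of_dist_le_mul
    intro t ht s hs
    rw [Metric.mem_ball, Real.dist_eq, sub_zero] at ht hs
    rw [hiInf t ht x, hiInf s hs x, Real.dist_eq, Real.dist_eq, Real.coe_nnabs,
      ← sub_mul, abs_mul, mul_comm]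
    refine mul_le_mul_of_nonneg_left ?_ (abs_nonneg _)
    refine le_trans (abs_min_sub_min_le_max _ _ _ _) ?_
    have h1 : dst x (y i) - w i - t - (dst x (y i) - w i - s) = -(t - s) := by ring
    rw [h1, sub_self, abs_neg, abs_zero]
    exact max_le (le_refl _) (abs_nonneg _)
  have hdiff : ∀ᵐ x ∂(volume.restrict Ω), HasDerivAt
      (fun t : ℝ => (⨅ j, (dst x (y j) - w j - t * (Pi.single i 1 : Fin K → ℝ) j)) * ρ x)
      (F' x) 0 := by
    filter_upwards [hae, ae_restrict_mem hΩm] with x hx hxΩ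
    rcases hx with hx0 | hxne
    · have hfun : (fun t : ℝ =>
          (⨅ j, (dst x (y j) - w j - t * (Pi.single i 1 : Fin K → ℝ) j)) * ρ x)
          = fun _ => (0:ℝ) := by
        funext t; rw [hx0, mul_zero]
      have hF'0 : F' x = 0 := by
        rw [hF']
        by_cases hxP : x ∈ P
        · rw [Set.indicator_of_mem hxP, hx0, neg_zero]
        · rw [Set.indicator_of_notMem hxP]
      rw [hfun, hF'0]
      exact hasDerivAt_const _ _
    · rcases lt_or_gt_of_ne hxne with hlt | hgt
      · have hxP := hltP x hxΩ hlt
        have hF'x : F' x = -ρ x := by rw [hF', Set.indicator_of_mem hxP]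
        rw [hF'x]
        have hD : HasDerivAt (fun t : ℝ => (dst x (y i) - w i - t) * ρ x) (-ρ x) 0 := by
          simpa using ((hasDerivAt_id (0:ℝ)).const_sub (dst x (y i) - w i)).mul_const (ρ x)
        refine hD.congr_of_eventuallyEq ?_
        have hball : Metric.ball (0:ℝ) (min 1 (b x - (dst x (y i) - w i))) ∈ nhds (0:ℝ) :=
          Metric.ball_mem_nhds 0 (lt_min one_pos (by linarith))
        filter_upwards [hball] with t ht
        rw [Metric.mem_ball, Real.dist_eq, sub_zero, lt_min_iff] at ht
        have h2 := abs_lt.1 ht.2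
        rw [hiInf t ht.1 x, min_eq_left (by linarith)]
      · have hxP := hgtP x hgt
        have hF'x : F' x = 0 := by rw [hF', Set.indicator_of_notMem hxP]
        rw [hF'x]
        refine (hasDerivAt_const (0:ℝ) (b x * ρ x)).congr_of_eventuallyEq ?_
        have hball : Metric.ball (0:ℝ) (min 1 ((dst x (y i) - w i) - b x)) ∈ nhds (0:ℝ) :=
          Metric.ball_mem_nhds 0 (lt_min one_pos (by linarith))
        filter_upwards [hball] with t ht
        rw [Metric.mem_ball, Real.dist_eq, sub_zero, lt_min_iff] at ht
        have h2 := abs_lt.1 ht.2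
        rw [hiInf t ht.1 x, min_eq_right (by linarith)]
  have key := hasDerivAt_integral_of_dominated_loc_of_lip (μ := volume.restrict Ω)
    (F := fun t x => (⨅ j, (dst x (y j) - w j - t * (Pi.single i 1 : Fin K → ℝ) j)) * ρ x)
    (F' := F') (x₀ := (0:ℝ)) (bound := ρ) (Metric.ball_mem_nhds 0 one_pos) hmeas hint hF'm hlip hρi.restrict hdiff
  have hval : (∫ x in Ω, F' x) = -∫ x in P, ρ x := by
    rw [hF', integral_indicator hPm, Measure.restrict_restrict hPm,
      Set.inter_eq_self_of_subset_left hPsub, integral_neg]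
  rw [hval] at key
  have hS : HasDerivAt (fun t : ℝ => (∑ k, w k * c k) + t * c i) (c i) 0 := by
    simpa using ((hasDerivAt_id (0:ℝ)).mul_const (c i)).const_add (∑ k, w k * c k)
  have hfinal := key.2.add hS
  have hde : c i - (∫ x in P, ρ x) = (-∫ x in P, ρ x) + c i := by ring
  rw [hde]
  exact hfinal
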